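/- Let c and c̃ both satisfy the cost assumptions (even, strictly convex, c(0) = c̃(0) = 0, strictly increasing on [0,∞)), and suppose c̃ cost-dominates c: for all 0 ≤ x₁ < x₂, c̃(x₂) - c̃(x₁) > c(x₂) - c(x₁). Fix any bounded function G : [0,1] → ℝ and p ≤ 1/2, and let p*_c be a maximizer of p' ↦ G(p') - c(p' - p) over [p, 1/2] and p*_{c̃} a maximizer of p' ↦ G(p') - c̃(p' - p) over [p, 1/2]. Then p*_{c̃} ≤ p*_c. -/
import Mathlib


/-- Under a cost-dominating (uniformly more convex) technology `c̃`, the optimal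
one-step move toward `1/2` is weakly smaller: `p*_{c̃} ≤ p*_c`. -/
theorem costlier_smaller_move
    (c ct : ℝ → ℝ) (G : ℝ → ℝ) (p pc pct : ℝ)
    (hc0 : c 0 = 0) (hct0 : ct 0 = 0)
    (hceven : ∀ x, c (-x) = c x) (hcteven : ∀ x, ct (-x) = ct x)
    (hcmono : StrictMonoOn c (Set.Ici (0 : ℝ))) (hctmono : StrictMonoOn ct (Set.Ici (0 : ℝ)))
    (hcconv : StrictConvexOn ℝ Set.univ c) (hctconv : StrictConvexOn ℝ Set.univ ct)
    (hdom : ∀ x₁ x₂ : ℝ, 0 ≤ x₁ → x₁ < x₂ → c x₂ - c x₁ < ct x₂ - ct x₁)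
    (hGbdd : ∃ M, ∀ x, |G x| ≤ M)
    (hp : 0 ≤ p) (hp2 : p ≤ 1 / 2)
    (hpc : pc ∈ Set.Icc p (1 / 2) ∧
        IsMaxOn (fun p' => G p' - c (p' - p)) (Set.Icc p (1 / 2)) pc)
    (hpct : pct ∈ Set.Icc p (1 / 2) ∧
        IsMaxOn (fun p' => G p' - ct (p' - p)) (Set.Icc p (1 / 2)) pct) :
    pct ≤ pc := by
  by_contra h
  push_neg at h
  obtain ⟨hmemc, hmaxc⟩ := hpc
  obtain ⟨hmemct, hmaxct⟩ := hpct
  have h1 := hmaxc hmemct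
  have h2 := hmaxct hmemc
  simp only [Set.mem_setOf_eq] at h1 h2
  have hx1 : (0:ℝ) ≤ pc - p := by linarith [hmemc.1]
  have hx2 : pc - p < pct - p := by linarith
  have := hdom (pc - p) (pct - p) hx1 hx2
  linarith
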